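/- For a = 1 and all n ∈ ℤ₊, F_n(1,q;0) = (-1)^n q^{-n(n-1)/2} (n+1). -/
import Mathlib


/-- `Fₙ(1,q;0) = (-1)ⁿ q^{-n(n-1)/2} (n+1)`. -/
theorem stmt3 (q : ℝ) (hq0 : 0 < q) (hq1 : q < 1)
    (F : ℕ → ℝ)
    (hF0 : F 0 = 1) (hF1 : F 1 = 0 - 2)
    (hFrec : ∀ n : ℕ, F (n + 2) =
      (0 - 2 * q ^ (-(n + 1 : ℤ))) * F (n + 1)
        - q ^ (-2 * (n + 1 : ℤ) + 1) * F n) :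
    ∀ n : ℕ, F n = (-1) ^ n * q ^ (-(n * (n - 1) / 2 : ℕ) : ℤ) * (n + 1) := by
  have hq : q ≠ 0 := ne_of_gt hq0
  intro n
  induction n using Nat.twoStepInduction with
  | zero => simpa using hF0
  | one => norm_num [hF1]
  | more n ih2 ih1 =>
    have hev : 2 ∣ n * (n - 1) := by
      rcases Nat.even_or_odd n with h | h
      · exact Dvd.dvd.mul_right h.two_dvd _
      · rcases n with _ | m
        · simp
        · exact Dvd.dvd.mul_left (by simpa using (Nat.Odd.sub_odd h odd_one).two_dvd) _
    have hmul1 : (n + 1) * ((n + 1) - 1) = n * (n - 1) + 2 * n := by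
      rcases n with _ | m
      · simp
      · show (m + 2) * (m + 1) = (m + 1) * m + 2 * (m + 1); ring
    have hmul2 : (n + 2) * ((n + 2) - 1) = n * (n - 1) + 2 * (2 * n + 1) := by
      rcases n with _ | m
      · simp
      · show (m + 3) * (m + 2) = (m + 1) * m + 2 * (2 * (m + 1) + 1); ring
    have e1 : ((n + 1) * ((n + 1) - 1) / 2 : ℕ) = n * (n - 1) / 2 + n := by omega
    have e2 : ((n + 2) * ((n + 2) - 1) / 2 : ℕ) = n * (n - 1) / 2 + (2 * n + 1) := by omega
    rw [hFrec n, ih1, ih2, e1, e2]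
    set a := n * (n - 1) / 2 with ha
    have h1 : q ^ (-((n : ℤ) + 1)) * q ^ (-((a + n : ℕ) : ℤ)) = q ^ (-((a + (2 * n + 1) : ℕ)) : ℤ) := by
      rw [← zpow_add₀ hq]; congr 1; push_cast; ring
    have h2 : q ^ (-2 * ((n : ℤ) + 1) + 1) * q ^ (-(a : ℤ)) = q ^ (-((a + (2 * n + 1) : ℕ)) : ℤ) := by
      rw [← zpow_add₀ hq]; congr 1; push_cast; ring
    push_cast
    push_cast at h1 h2
    linear_combination ((0 - 2) * (-1 : ℝ) ^ (n + 1) * ((n : ℝ) + 1 + 1)) * h1 -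
      ((-1 : ℝ) ^ n * ((n : ℝ) + 1)) * h2
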